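/- Let K be a field of characteristic zero and let a, b be n×n matrices over K satisfying ab + ba = I and ba²b = 0. Then ab and ba are idempotent, trace(ab) = n/2, so n is even. -/

import Mathlib

theorem stmt13 {K : Type*} [Field K] [CharZero K] {n : ℕ}
    (a b : Matrix (Fin n) (Fin n) K)
    (h1 : a * b + b * a = 1)
    (h2 : b * a ^ 2 * b = 0) :
    (a * b) * (a * b) = a * b ∧ (b * a) * (b * a) = b * a ∧
    (a * b).trace = (n : K) / 2 ∧ Even n := by
  have hqp : (b * a) * (a * b) = 0 := by
    have : (b * a) * (a * b) = b * a ^ 2 * b := by noncomm_ring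
    rw [this, h2]
  have hq : (b * a) * (b * a) = b * a := by
    have := congrArg (fun x => (b * a) * x) h1
    simpa [mul_add, hqp] using this
  have hp : (a * b) * (a * b) = a * b := by
    have hab : a * b = 1 - b * a := eq_sub_of_add_eq h1
    rw [hab]
    rw [sub_mul, one_mul, mul_sub, mul_one, hq]
    abel
  have htr : (a * b).trace = (n : K) / 2 := by
    have h3 : (a * b).trace + (b * a).trace = (n : K) := by
      rw [← Matrix.trace_add, h1, Matrix.trace_one]
      simp
    have hcomm : (a * b).trace = (b * a).trace := Matrix.trace_mul_comm a b
    rw [eq_div_iff (by norm_num : (2:K) ≠ 0)]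
    linear_combination h3 + hcomm
  refine ⟨hp, hq, htr, ?_⟩
  -- use that a*b is idempotent, so its trace is the rank (a natural number)
  set p := a * b with hpdef
  have hlin : (Matrix.toLin' p) ∘ₗ (Matrix.toLin' p) = Matrix.toLin' p := by
    rw [← Matrix.toLin'_mul, hp]
  obtain ⟨S, hS⟩ := (LinearMap.isProj_iff_isIdempotentElem (Matrix.toLin' p)).mpr hlin
  have htr2 : LinearMap.trace K _ (Matrix.toLin' p) =
      (Module.finrank K S : K) := hS.trace
  have htr3 : LinearMap.trace K _ (Matrix.toLin' p) = p.trace := by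
    rw [LinearMap.trace_eq_matrix_trace K (Pi.basisFun K (Fin n)),
      LinearMap.toMatrix_eq_toMatrix', LinearMap.toMatrix'_toLin']
  have key : (Module.finrank K S : K) = (n : K) / 2 := by
    rw [← htr2, htr3, htr]
  have : (2 * Module.finrank K S : K) = (n : K) := by
    linear_combination 2 * key
  have hn : n = 2 * Module.finrank K S := by
    exact_mod_cast this.symm
  exact ⟨Module.finrank K S, by omega⟩
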